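/- arXiv:1702.03566 — 4 statements merged into one kernel-verified Lean document; each statement's English description precedes it below -/
import Mathlib

section
/- Let P be a special perfect-tree forcing notion. If S, T ∈ P are not almost disjoint, then S and T are comparable: S ⊆ T or T ⊆ S. Moreover, every special perfect-tree forcing notion is regular. -/
noncomputable section

/-- Finite binary strings. -/
abbrev Str : Type := List Bool

/-- Points of Cantor space `2^ω`. -/
abbrev Pt : Type := ℕ → Bool

/-- The length-`n` initial segment of a point of Cantor space, as a string. -/
def seg (a : Pt) (n : ℕ) : Str := (List.range n).map a

/-- A tree: a set of strings closed under initial segments. -/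
def IsTree (T : Set Str) : Prop := ∀ ⦃s t : Str⦄, s <+: t → t ∈ T → s ∈ T

/-- A perfect tree: a nonempty tree in which every string has two
incomparable extensions inside the tree. -/
def IsPerfectTree (T : Set Str) : Prop :=
  T.Nonempty ∧ IsTree T ∧
    ∀ s ∈ T, ∃ t₁ t₂, t₁ ∈ T ∧ t₂ ∈ T ∧ s <+: t₁ ∧ s <+: t₂ ∧ ¬ t₁ <+: t₂ ∧ ¬ t₂ <+: t₁

/-- The restriction `T↾s = {t ∈ T : s ⊆ t or t ⊆ s}`. -/
def Tres (T : Set Str) (s : Str) : Set Str := {t ∈ T | s <+: t ∨ t <+: s}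

/-- The set `[T]` of branches of a tree `T`. -/
def branches (T : Set Str) : Set Pt := {a | ∀ n, seg a n ∈ T}

/-- `s` is the stem (root) of `T`: the longest `s ∈ T` with `T = T↾s`. -/
def IsStem (T : Set Str) (s : Str) : Prop :=
  s ∈ T ∧ T = Tres T s ∧ ∀ t ∈ T, T = Tres T t → t <+: s

open Classical in
/-- The stem `root(T)` of a tree (junk value `[]` if there is none). -/
def stem (T : Set Str) : Str := if h : ∃ s, IsStem T s then h.choose else []

/-- Simple splitting `T→i = T↾(root(T)⌢i)`. -/
def splitOne (T : Set Str) (i : Bool) : Set Str := Tres T (stem T ++ [i])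

/-- Iterated splitting `T→u`. -/
def splitIter (T : Set Str) (u : Str) : Set Str := u.foldl splitOne T

/-- Almost disjointness of trees: finite intersection. -/
def AD (S T : Set Str) : Prop := (S ∩ T).Finite

/-- A perfect-tree forcing notion: a nonempty set of perfect trees closed
under restrictions. -/
def IsPTF (P : Set (Set Str)) : Prop :=
  P.Nonempty ∧ (∀ T ∈ P, IsPerfectTree T) ∧ ∀ T ∈ P, ∀ s ∈ T, Tres T s ∈ P

/-- `A` is relatively clopen in `B` (as a subspace of Cantor space). -/
def ClopenIn (A B : Set Pt) : Prop := IsClopen ((fun x : B => (x : Pt)) ⁻¹' A)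

/-- `A` is relatively open in `B` (as a subspace of Cantor space). -/
def OpenIn (A B : Set Pt) : Prop := IsOpen ((fun x : B => (x : Pt)) ⁻¹' A)

/-- A special perfect-tree forcing notion: `P = {T↾s : s ∈ T ∈ A}` for an
antichain (pairwise a.d. set) `A ⊆ P`. -/
def SpecialPTF (P : Set (Set Str)) : Prop :=
  ∃ A ⊆ P, A.Pairwise AD ∧ P = {R | ∃ T ∈ A, ∃ s ∈ T, R = Tres T s}

/-- A regular perfect-tree forcing notion: `[S] ∩ [T]` is relatively clopen
in `[S]` or in `[T]`, for all `S, T ∈ P`. -/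
def RegularPTF (P : Set (Set Str)) : Prop :=
  ∀ S ∈ P, ∀ T ∈ P,
    ClopenIn (branches S ∩ branches T) (branches S) ∨
    ClopenIn (branches S ∩ branches T) (branches T)

/-- `T ⊆ᶠ ⋃ D`: `[T]` is covered by finitely many `[S]`, `S ∈ D`. -/
def SqFin (T : Set Str) (D : Set (Set Str)) : Prop :=
  ∃ D' ⊆ D, D'.Finite ∧ branches T ⊆ ⋃ S ∈ D', branches S

/-- `P ⊑ Q`: `Q` is a refinement of `P`. -/
def Refines (P Q : Set (Set Str)) : Prop :=
  (∀ T ∈ P, ∃ S ∈ Q, S ⊆ T) ∧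
  (∀ S ∈ Q, SqFin S P) ∧
  (∀ S ∈ Q, ∀ T ∈ P, ClopenIn (branches S ∩ branches T) (branches S) ∧ ¬ T ⊆ S)

/-- `D` is dense in `P`. -/
def DenseIn (D P : Set (Set Str)) : Prop := ∀ T ∈ P, ∃ S ∈ D, S ⊆ T

/-- `D` is pre-dense in `P`. -/
def PreDenseIn (D P : Set (Set Str)) : Prop :=
  DenseIn {T ∈ P | ∃ S ∈ D, T ⊆ S} P

/-- `P ⊑_D Q`: `Q` locks `D` over `P`. -/
def Locks (P D Q : Set (Set Str)) : Prop :=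
  Refines P Q ∧ ∀ S ∈ Q, SqFin S D

/-- A finite splitting system of height `n` over `P`. -/
def IsFSS (P : Set (Set Str)) (n : ℕ) (φ : Str → Set Str) : Prop :=
  (∀ s : Str, s.length ≤ n → φ s ∈ P) ∧
  ∀ (s : Str) (i : Bool), s.length < n → φ (s ++ [i]) ⊆ splitOne (φ s) i

lemma tres_subset (T : Set Str) (s : Str) : Tres T s ⊆ T := fun _ ht => ht.1

lemma tres_mono (T : Set Str) {s₁ s₂ : Str} (h : s₁ <+: s₂) :
    Tres T s₂ ⊆ Tres T s₁ := by
  rintro t ⟨htT, h2⟩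
  refine ⟨htT, ?_⟩
  rcases h2 with h2 | h2
  · exact Or.inl (h.trans h2)
  · rcases (List.prefix_or_prefix_of_prefix h2 h) with h3 | h3
    · exact Or.inr h3
    · exact Or.inl h3

lemma prefixes_finite (s : Str) : {t : Str | t <+: s}.Finite := by
  have : {t : Str | t <+: s} ⊆ ↑s.inits.toFinset := by
    intro t ht
    simp [List.mem_inits]
    exact ht
  exact Set.Finite.subset (s.inits.toFinset.finite_toSet) this

lemma tres_ad (T : Set Str) {s₁ s₂ : Str} (h : ¬ (s₁ <+: s₂ ∨ s₂ <+: s₁)) :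
    (Tres T s₁ ∩ Tres T s₂).Finite := by
  apply Set.Finite.subset ((prefixes_finite s₁).union (prefixes_finite s₂))
  rintro t ⟨⟨_, h1⟩, ⟨_, h2⟩⟩
  rcases h1 with h1 | h1
  · rcases h2 with h2 | h2
    · exact absurd (List.prefix_or_prefix_of_prefix h1 h2) h
    · exact Or.inr h2
  · exact Or.inl h1

lemma seg_length (a : Pt) (n : ℕ) : (seg a n).length = n := by
  simp [seg]

lemma branches_empty_of_fin {S T : Set Str} (h : (S ∩ T).Finite) :
    branches S ∩ branches T = ∅ := by
  by_contra hne
  rcases Set.nonempty_iff_ne_empty.mpr hne with ⟨a, haS, haT⟩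
  have hinj : Function.Injective (fun n => seg a n) := by
    intro m n hmn
    have := congrArg List.length hmn
    simpa [seg_length] using this
  have : Set.range (fun n => seg a n) ⊆ S ∩ T := by
    rintro _ ⟨n, rfl⟩
    exact ⟨haS n, haT n⟩
  have hfin := h.subset this
  have := Set.finite_coe_iff.mpr hfin
  exact Set.infinite_range_of_injective hinj hfin

lemma branches_mono {S T : Set Str} (h : S ⊆ T) : branches S ⊆ branches T :=
  fun _ ha n => h (ha n)

lemma clopen_of_empty {B : Set Pt} : ClopenIn (∅ : Set Pt) B := by
  have : ((fun x : B => (x : Pt)) ⁻¹' (∅ : Set Pt)) = ∅ := by simp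
  rw [ClopenIn, this]; exact isClopen_empty

lemma clopen_of_subset {A B : Set Pt} (h : B ⊆ A) : ClopenIn A B := by
  have : ((fun x : B => (x : Pt)) ⁻¹' A) = Set.univ := by
    ext x; simp [h x.2]
  rw [ClopenIn, this]; exact isClopen_univ

/-- Lemma 2.7 (regfn), first part: in a special perfect-tree forcing notion,
non-a.d. trees are comparable; moreover every special forcing is regular. -/
theorem stmt6 (P : Set (Set Str)) (hP : IsPTF P) (hsp : SpecialPTF P) :
    (∀ S ∈ P, ∀ T ∈ P, ¬ AD S T → S ⊆ T ∨ T ⊆ S) ∧ RegularPTF P := by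
  obtain ⟨A, hAP, hpair, hPeq⟩ := hsp
  have key : ∀ S ∈ P, ∀ T ∈ P, ¬ AD S T → S ⊆ T ∨ T ⊆ S := by
    intro S hS T hT hnad
    rw [hPeq] at hS hT
    obtain ⟨T₁, hT₁, s₁, hs₁, rfl⟩ := hS
    obtain ⟨T₂, hT₂, s₂, hs₂, rfl⟩ := hT
    have hT12 : T₁ = T₂ := by
      by_contra hne
      exact hnad ((hpair hT₁ hT₂ hne).subset
        (Set.inter_subset_inter (tres_subset _ _) (tres_subset _ _)))
    subst hT12
    have hcomp : s₁ <+: s₂ ∨ s₂ <+: s₁ := by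
      by_contra h
      exact hnad (tres_ad T₁ h)
    rcases hcomp with h | h
    · exact Or.inr (tres_mono T₁ h)
    · exact Or.inl (tres_mono T₁ h)
  refine ⟨key, ?_⟩
  intro S hS T hT
  by_cases had : AD S T
  · left
    rw [branches_empty_of_fin had]
    exact clopen_of_empty
  · rcases key S hS T hT had with h | h
    · left
      exact clopen_of_subset (fun a ha => ⟨ha, branches_mono h ha⟩)
    · right
      exact clopen_of_subset (fun a ha => ⟨branches_mono h ha, ha⟩)

end
end

section
/- Let P be a regular perfect-tree forcing notion. If S, T ∈ P are not almost disjoint, then they are compatible in P: there exists a tree R ∈ P with R ⊆ S ∩ T. -/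
noncomputable section

lemma seg_getElem (a : Pt) (n i : ℕ) (h : i < (seg a n).length) : (seg a n)[i] = a i := by
  simp [seg]

lemma prefix_getD {l₁ l₂ : Str} (h : l₁ <+: l₂) {n : ℕ} (hn : n < l₁.length) :
    l₂.getD n false = l₁.getD n false := by
  have hn2 : n < l₂.length := lt_of_lt_of_le hn h.length_le
  rw [List.getD_eq_getElem _ _ hn, List.getD_eq_getElem _ _ hn2, h.getElem hn]

lemma exists_branch (D : Set Str) (hD : IsTree D) (s : Str)
    (hs : {t ∈ D | s <+: t}.Infinite) :
    ∃ a : Pt, a ∈ branches D ∧ seg a s.length = s := by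
  classical
  set E : Str → Set Str := fun u => {t ∈ D | u <+: t} with hE
  have step : ∀ u, (E u).Infinite → ∃ i, (E (u ++ [i])).Infinite := by
    intro u hu
    by_contra hc
    push_neg at hc
    have h0 := hc false
    have h1 := hc true
    apply hu
    refine Set.Finite.subset ((h0.union h1).insert u) ?_
    rintro t ⟨htD, htp⟩
    rcases eq_or_ne u t with rfl | hne
    · exact Set.mem_insert _ _
    · obtain ⟨r, rfl⟩ := htp
      cases r with
      | nil => simp at hne
      | cons i r' =>
        right
        have hpre : u ++ [i] <+: u ++ i :: r' := ⟨r', by simp⟩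
        cases i
        · exact Or.inl ⟨htD, hpre⟩
        · exact Or.inr ⟨htD, hpre⟩
  let bit : Str → Bool := fun u => if h : ∃ i, (E (u ++ [i])).Infinite then h.choose else false
  have bit_spec : ∀ u, (E u).Infinite → (E (u ++ [bit u])).Infinite := by
    intro u hu
    have h := step u hu
    simp only [bit, dif_pos h]
    exact h.choose_spec
  let g : ℕ → Str := fun n => Nat.rec s (fun _ u => u ++ [bit u]) n
  have hgsucc : ∀ n, g (n+1) = g n ++ [bit (g n)] := fun n => rfl
  have hglen : ∀ n, (g n).length = s.length + n := by
    intro n; induction n with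
    | zero => simp [g]
    | succ n ih => rw [hgsucc, List.length_append, ih]; simp [Nat.add_assoc]
  have hginf : ∀ n, (E (g n)).Infinite := by
    intro n; induction n with
    | zero => exact hs
    | succ n ih => rw [hgsucc]; exact bit_spec _ ih
  have hgD : ∀ n, g n ∈ D := by
    intro n
    obtain ⟨t, htD, htp⟩ := (hginf n).nonempty
    exact hD htp htD
  have hgmono : ∀ m n, m ≤ n → g m <+: g n := by
    intro m n h
    induction n with
    | zero => simp_all
    | succ n ih =>
      rcases Nat.lt_or_ge m (n+1) with h' | h'
      · exact (ih (Nat.lt_succ_iff.mp h')).trans (by rw [hgsucc]; exact ⟨_, rfl⟩)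
      · have : m = n + 1 := le_antisymm h h'
        subst this; exact List.prefix_refl _
  set a : Pt := fun n => (g (n+1)).getD n false with ha
  have key : ∀ k n, n < (g k).length → (g k).getD n false = a n := by
    intro k n hn
    have hn1 : n < (g (n+1)).length := by have := hglen (n+1); omega
    rcases le_total k (n+1) with h | h
    · exact (prefix_getD (hgmono k (n+1) h) hn).symm
    · exact prefix_getD (hgmono (n+1) k h) hn1
  have hseg : ∀ m, seg a m = (g m).take m := by
    intro m
    apply List.ext_getElem
    · have := hglen m; rw [seg_length, List.length_take]; omega
    · intro i h1 h2
      rw [seg_getElem, List.getElem_take]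
      have hi : i < (g m).length := by have := hglen m; rw [seg_length] at h1; omega
      rw [← List.getD_eq_getElem _ false hi, key m i hi]
  refine ⟨a, ?_, ?_⟩
  · intro n
    rw [hseg]
    exact hD (List.take_prefix _ _) (hgD n)
  · rw [hseg]
    have hp : s <+: g s.length := hgmono 0 s.length (Nat.zero_le _)
    exact (List.prefix_iff_eq_take.mp hp).symm

lemma perfect_ext_infinite {S : Set Str} (hS : IsPerfectTree S) {t : Str} (ht : t ∈ S) :
    {u ∈ S | t <+: u}.Infinite := by
  intro hfin
  obtain ⟨m, ⟨hmS, hmp⟩, hmax⟩ : ∃ m ∈ {u ∈ S | t <+: u}, ∀ a' ∈ {u ∈ S | t <+: u},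
      m.length ≤ a'.length → m.length = a'.length := by
    obtain ⟨m, hm, hmax⟩ := Set.Finite.exists_maximalFor List.length _ hfin ⟨t, ht, List.prefix_refl t⟩
    exact ⟨m, hm, fun a' ha' hle => le_antisymm hle (hmax ha' hle)⟩
  obtain ⟨t₁, t₂, h1S, h2S, h1p, h2p, h12, h21⟩ := hS.2.2 m hmS
  have h1 : t₁ ∈ {u ∈ S | t <+: u} := ⟨h1S, hmp.trans h1p⟩
  have h2 : t₂ ∈ {u ∈ S | t <+: u} := ⟨h2S, hmp.trans h2p⟩
  have e1 : m = t₁ := h1p.eq_of_length (hmax _ h1 h1p.length_le)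
  have e2 : m = t₂ := h2p.eq_of_length (hmax _ h2 h2p.length_le)
  exact h12 (e1 ▸ e2 ▸ List.prefix_refl m)

lemma clopen_nbhd {A B : Set Pt} (h : ClopenIn A B) {a : Pt} (haB : a ∈ B) (haA : a ∈ A) :
    ∃ n, ∀ b ∈ B, (∀ i < n, b i = a i) → b ∈ A := by
  obtain ⟨V, hV, hVeq⟩ := isOpen_induced_iff.mp h.isOpen
  have haV : a ∈ V := by
    have : (⟨a, haB⟩ : B) ∈ (fun x : B => (x : Pt)) ⁻¹' A := haA
    rw [← hVeq] at this; exact this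
  obtain ⟨I, u, hu, hsub⟩ := isOpen_pi_iff.mp hV a haV
  refine ⟨I.sup id + 1, fun b hbB hb => ?_⟩
  have hbV : b ∈ V := by
    apply hsub
    intro i hi
    rw [hb i (Nat.lt_succ_of_le (Finset.le_sup (f := id) hi))]
    exact (hu i hi).2
  have : (⟨b, hbB⟩ : B) ∈ Subtype.val ⁻¹' V := hbV
  rw [hVeq] at this; exact this

lemma key_lemma (P : Set (Set Str)) (hP : IsPTF P) (S T : Set Str) (hS : S ∈ P)
    (hT : T ∈ P) (h : ¬ AD S T)
    (hcl : ClopenIn (branches S ∩ branches T) (branches S)) :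
    ∃ R ∈ P, R ⊆ S ∩ T := by
  have hStree : IsTree S := (hP.2.1 S hS).2.1
  have hTtree : IsTree T := (hP.2.1 T hT).2.1
  have hDtree : IsTree (S ∩ T) := fun s t hp ht => ⟨hStree hp ht.1, hTtree hp ht.2⟩
  have hinf : {t ∈ S ∩ T | ([] : Str) <+: t}.Infinite := by
    have : {t ∈ S ∩ T | ([] : Str) <+: t} = S ∩ T := by
      ext t; simp
    rw [this]; exact h
  obtain ⟨a, haD, -⟩ := exists_branch (S ∩ T) hDtree [] hinf
  have haS : a ∈ branches S := fun n => (haD n).1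
  have haT : a ∈ branches T := fun n => (haD n).2
  obtain ⟨n, hn⟩ := clopen_nbhd hcl haS ⟨haS, haT⟩
  have hs₀ : seg a n ∈ S := haS n
  refine ⟨Tres S (seg a n), hP.2.2 S hS _ hs₀, ?_⟩
  rintro t ⟨htS, hcase⟩
  refine ⟨htS, ?_⟩
  rcases hcase with hp | hp
  · -- seg a n <+: t : show t ∈ T
    obtain ⟨b, hbS, hbseg⟩ := exists_branch S hStree t (perfect_ext_infinite (hP.2.1 S hS) htS)
    have hbi : ∀ i < n, b i = a i := by
      intro i hi
      have hnt : n ≤ t.length := by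
        have := hp.length_le; rwa [seg_length] at this
      have hi' : i < t.length := lt_of_lt_of_le hi hnt
      have hilen : i < (seg a n).length := by rw [seg_length]; exact hi
      have hblen : i < (seg b t.length).length := by rw [seg_length]; exact hi'
      calc b i = (seg b t.length)[i]'hblen := (seg_getElem b t.length i hblen).symm
        _ = t[i]'hi' := List.getElem_of_eq hbseg hblen
        _ = (seg a n)[i]'hilen := (hp.getElem hilen).symm
        _ = a i := seg_getElem a n i hilen
    have hbT : b ∈ branches T := (hn b hbS hbi).2
    have := hbT t.length
    rw [hbseg] at this; exact this
  · -- t <+: seg a n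
    exact hTtree hp (haT n)

/-- Lemma 2.7 (regfn) (1): in a regular perfect-tree forcing notion, trees
that are not almost disjoint are compatible. -/
theorem stmt7 (P : Set (Set Str)) (hP : IsPTF P) (hreg : RegularPTF P)
    (S T : Set Str) (hS : S ∈ P) (hT : T ∈ P) (h : ¬ AD S T) :
    ∃ R ∈ P, R ⊆ S ∩ T := by
  rcases hreg S hS T hT with hcl | hcl
  · exact key_lemma P hP S T hS hT h hcl
  · have h' : ¬ AD T S := by rwa [AD, Set.inter_comm]
    have hcl' : ClopenIn (branches T ∩ branches S) (branches T) := by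
      rwa [Set.inter_comm]
    obtain ⟨R, hR, hsub⟩ := key_lemma P hP T S hT hS h' hcl'
    exact ⟨R, hR, by rwa [Set.inter_comm]⟩

end
end

section
/- Let P be a regular perfect-tree forcing notion and S₁,…,S_k ∈ P. Then there is a finite set of pairwise almost disjoint trees R₁,…,R_n ∈ P such that [S₁] ∩ ⋯ ∩ [S_k] = [R₁] ∪ ⋯ ∪ [R_n] (where the union may be empty, i.e. n = 0 is allowed). -/
noncomputable section

lemma seg_prefix (a : Pt) {m n : ℕ} (h : m ≤ n) : seg a m <+: seg a n := by
  have : seg a m = (seg a n).take m := by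
    simp [seg, ← List.map_take, List.take_range, h]
  rw [this]; exact List.take_prefix _ _

lemma seg_eq_iff {a b : Pt} {n : ℕ} : seg a n = seg b n ↔ ∀ i < n, a i = b i := by
  simp [seg, List.map_eq_map_iff]

lemma isOpen_cyl (x : Pt) (n : ℕ) : IsOpen {a : Pt | seg a n = seg x n} := by
  have : {a : Pt | seg a n = seg x n} = ⋂ i ∈ Finset.range n, {a : Pt | a i = x i} := by
    ext a; simp [seg_eq_iff]
  rw [this]
  refine isOpen_biInter_finset fun i _ => ?_
  have : {a : Pt | a i = x i} = (fun a : Pt => a i) ⁻¹' {x i} := rfl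
  rw [this]
  exact (continuous_apply i).isOpen_preimage _ (isOpen_discrete _)

lemma isClosed_branches (T : Set Str) : IsClosed (branches T) := by
  rw [← isOpen_compl_iff, isOpen_iff_forall_mem_open]
  intro a ha
  simp only [Set.mem_compl_iff, branches, Set.mem_setOf_eq, not_forall] at ha
  obtain ⟨n, hn⟩ := ha
  exact ⟨{b : Pt | seg b n = seg a n}, fun b hb hb' => hn (hb ▸ hb' n),
    isOpen_cyl a n, rfl⟩

lemma branches_Tres {T : Set Str} {s : Str} :
    branches (Tres T s) = {a | a ∈ branches T ∧ seg a s.length = s} := by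
  ext a
  constructor
  · intro h
    refine ⟨fun n => (h n).1, ?_⟩
    rcases (h s.length).2 with h' | h'
    · exact (List.IsPrefix.eq_of_length h' (by simp [seg_length])).symm
    · exact List.IsPrefix.eq_of_length h' (by simp [seg_length])
  · rintro ⟨h1, h2⟩ n
    refine ⟨h1 n, ?_⟩
    rcases le_total n s.length with h | h
    · exact Or.inr (h2 ▸ seg_prefix a h)
    · exact Or.inl (h2 ▸ seg_prefix a h)

lemma isTree_Tres {T : Set Str} (hT : IsTree T) (s : Str) : IsTree (Tres T s) := by
  rintro t u htu ⟨huT, hcomp⟩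
  refine ⟨hT htu huT, ?_⟩
  rcases hcomp with h | h
  · exact List.prefix_or_prefix_of_prefix h htu
  · exact Or.inr (htu.trans h)
lemma seg_succ (a : Pt) (n : ℕ) : seg a (n+1) = seg a n ++ [a n] := by
  simp [seg, List.range_succ]

open Classical in
def kbit (T : Set Str) (s : Str) : Bool :=
  if {t ∈ T | (s ++ [false]) <+: t}.Infinite then false else true

def kseq (T : Set Str) : ℕ → Str
  | 0 => []
  | n+1 => kseq T n ++ [kbit T (kseq T n)]

lemma ext_split {T : Set Str} {s : Str} (h : {t ∈ T | s <+: t}.Infinite) :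
    {t ∈ T | (s ++ [kbit T s]) <+: t}.Infinite := by
  classical
  unfold kbit
  split_ifs with hf
  · exact hf
  · have hfin : {t ∈ T | (s ++ [false]) <+: t}.Finite := Set.not_infinite.mp hf
    by_contra htr
    have hsub : {t ∈ T | s <+: t} ⊆
        insert s ({t ∈ T | (s ++ [false]) <+: t} ∪ {t ∈ T | (s ++ [true]) <+: t}) := by
      rintro t ⟨htT, hst⟩
      obtain ⟨d, rfl⟩ := hst
      cases d with
      | nil => simp
      | cons b d' =>
        cases b
        · exact Set.mem_insert_of_mem _ (Or.inl ⟨htT, ⟨d', by simp⟩⟩)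
        · exact Set.mem_insert_of_mem _ (Or.inr ⟨htT, ⟨d', by simp⟩⟩)
    exact h (Set.Finite.subset ((hfin.union (Set.not_infinite.mp htr)).insert s) hsub)

lemma kseq_infinite {T : Set Str} (h : T.Infinite) (n : ℕ) :
    {t ∈ T | kseq T n <+: t}.Infinite := by
  induction n with
  | zero =>
    have : {t ∈ T | kseq T 0 <+: t} = T := by
      ext t; simp [kseq]
    rwa [this]
  | succ n ih => exact ext_split ih

lemma koenig {T : Set Str} (hT : IsTree T) (h : T.Infinite) : ∃ a, a ∈ branches T := by
  refine ⟨fun n => kbit T (kseq T n), fun n => ?_⟩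
  have hseg : ∀ m, seg (fun k => kbit T (kseq T k)) m = kseq T m := by
    intro m; induction m with
    | zero => simp [seg, kseq]
    | succ m ih => rw [seg_succ, ih]; rfl
  rw [hseg]
  obtain ⟨t, ⟨htT, hpre⟩⟩ := (kseq_infinite h n).nonempty
  exact hT hpre htT
lemma exists_cyl_subset {V : Set Pt} (hV : IsOpen V) {x : Pt} (hx : x ∈ V) :
    ∃ n, {a : Pt | seg a n = seg x n} ⊆ V := by
  obtain ⟨I, u, hu, hsub⟩ := isOpen_pi_iff.mp hV x hx
  refine ⟨I.sup id + 1, fun a ha => hsub fun i hi => ?_⟩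
  have : a i = x i := seg_eq_iff.mp ha i (Nat.lt_succ_of_le (Finset.le_sup (f := id) hi))
  rw [this]; exact (hu i hi).2

lemma clopen_uniform {X : Set Str} (A : Set Pt) (hAB : A ⊆ branches X)
    (h : ClopenIn A (branches X)) :
    ∃ N, ∀ y ∈ branches X, ∀ z ∈ branches X, seg y N = seg z N → (y ∈ A ↔ z ∈ A) := by
  set B := branches X with hB
  obtain ⟨U, hUopen, hU⟩ : ∃ U, IsOpen U ∧ Subtype.val ⁻¹' U = Subtype.val ⁻¹' A :=
    isOpen_induced_iff.mp h.2
  obtain ⟨C, hCclosed, hC⟩ : ∃ C, IsClosed C ∧ Subtype.val ⁻¹' C = Subtype.val ⁻¹' A :=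
    isClosed_induced_iff.mp h.1
  have hU' : U ∩ B = A := by
    rw [Subtype.preimage_coe_eq_preimage_coe_iff] at hU
    rw [Set.inter_comm, hU, Set.inter_comm]
    exact Set.inter_eq_self_of_subset_left hAB
  have hC' : C ∩ B = A := by
    rw [Subtype.preimage_coe_eq_preimage_coe_iff] at hC
    rw [Set.inter_comm, hC, Set.inter_comm]
    exact Set.inter_eq_self_of_subset_left hAB
  have key : ∀ x : Pt, ∃ n, x ∈ B →
      ({a : Pt | seg a n = seg x n} ⊆ U ∧ x ∈ A) ∨
      ({a : Pt | seg a n = seg x n} ⊆ Cᶜ ∧ x ∉ A) := by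
    intro x
    by_cases hxB : x ∈ B
    · by_cases hxA : x ∈ A
      · have hxU : x ∈ U := (hU' ▸ hxA : x ∈ U ∩ B).1
        obtain ⟨n, hn⟩ := exists_cyl_subset hUopen hxU
        exact ⟨n, fun _ => Or.inl ⟨hn, hxA⟩⟩
      · have hxC : x ∈ Cᶜ := fun hmem => hxA (hC' ▸ Set.mem_inter hmem hxB)
        obtain ⟨n, hn⟩ := exists_cyl_subset hCclosed.isOpen_compl hxC
        exact ⟨n, fun _ => Or.inr ⟨hn, hxA⟩⟩
    · exact ⟨0, fun hxB' => absurd hxB' hxB⟩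
  choose n hn using key
  have hcompact : IsCompact B := (isClosed_branches X).isCompact
  obtain ⟨t, ht⟩ := hcompact.elim_finite_subcover
    (fun i : B => {a : Pt | seg a (n i) = seg (i : Pt) (n i)})
    (fun i => isOpen_cyl _ _)
    (fun x hx => Set.mem_iUnion.mpr ⟨⟨x, hx⟩, rfl⟩)
  refine ⟨t.sup (fun i => n i), fun y hy z hz hyz => ?_⟩
  obtain ⟨i, hit, hyi⟩ := Set.mem_iUnion₂.mp (ht hy)
  have hle : n i ≤ t.sup (fun i => n i) := Finset.le_sup (f := fun i : B => n (i : Pt)) hit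
  have hzy : seg z (n i) = seg y (n i) :=
    seg_eq_iff.mpr fun j hj => (seg_eq_iff.mp hyz j (lt_of_lt_of_le hj hle)).symm
  have hzi : z ∈ {a : Pt | seg a (n i) = seg (i : Pt) (n i)} := by
    rw [Set.mem_setOf_eq, hzy]; exact hyi
  rcases hn i i.2 with ⟨hsub, hiA⟩ | ⟨hsub, hiA⟩
  · constructor <;> intro _
    · exact (hU' ▸ Set.mem_inter (hsub hzi) hz : z ∈ A)
    · exact (hU' ▸ Set.mem_inter (hsub hyi) hy : y ∈ A)
  · constructor <;> intro hmem
    · exact absurd ((hC' ▸ hmem : y ∈ C ∩ B).1) (hsub hyi)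
    · exact absurd ((hC' ▸ hmem : z ∈ C ∩ B).1) (hsub hzi)

lemma decomp_clopen {P : Set (Set Str)} (hP : IsPTF P) {X : Set Str} (hX : X ∈ P)
    {A : Set Pt} (hAB : A ⊆ branches X) (h : ClopenIn A (branches X)) :
    ∃ F ⊆ P, F.Finite ∧ (F.Pairwise fun S T => Disjoint (branches S) (branches T)) ∧
      A = ⋃ W ∈ F, branches W := by
  obtain ⟨N, hN⟩ := clopen_uniform A hAB h
  refine ⟨(fun s => Tres X s) '' ((fun x => seg x N) '' A), ?_, ?_, ?_, ?_⟩
  · rintro _ ⟨_, ⟨x, hxA, rfl⟩, rfl⟩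
    exact hP.2.2 X hX _ (hAB hxA N)
  · exact (((List.finite_length_eq Bool N).subset (by rintro _ ⟨x, _, rfl⟩; exact seg_length x N)).image _)
  · rintro _ ⟨_, ⟨x, hxA, rfl⟩, rfl⟩ _ ⟨_, ⟨y, hyA, rfl⟩, rfl⟩ hne
    rw [Set.disjoint_left]
    rintro a ha hb
    rw [branches_Tres, Set.mem_setOf_eq, seg_length] at ha hb
    exact hne (by rw [← ha.2, ← hb.2])
  · ext a
    simp only [Set.mem_iUnion, Set.mem_image, exists_prop, exists_exists_and_eq_and]
    constructor
    · intro haA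
      refine ⟨a, haA, ?_⟩
      rw [branches_Tres, Set.mem_setOf_eq, seg_length]
      exact ⟨hAB haA, rfl⟩
    · rintro ⟨x, hxA, hmem⟩
      rw [branches_Tres, Set.mem_setOf_eq, seg_length] at hmem
      exact (hN a hmem.1 x (hAB hxA) hmem.2).mpr hxA
lemma ad_of_disjoint {S T : Set Str} (hS : IsTree S) (hT : IsTree T)
    (h : Disjoint (branches S) (branches T)) : AD S T := by
  by_contra hinf
  have htree : IsTree (S ∩ T) := fun s t hst hmem => ⟨hS hst hmem.1, hT hst hmem.2⟩
  obtain ⟨a, ha⟩ := koenig htree hinf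
  exact Set.disjoint_left.mp h (fun n => (ha n).1) (fun n => (ha n).2)

lemma pair_decomp {P : Set (Set Str)} (hP : IsPTF P) (hreg : RegularPTF P)
    {S T : Set Str} (hS : S ∈ P) (hT : T ∈ P) :
    ∃ F ⊆ P, F.Finite ∧ (F.Pairwise fun W W' => Disjoint (branches W) (branches W')) ∧
      branches S ∩ branches T = ⋃ W ∈ F, branches W := by
  rcases hreg S hS T hT with h | h
  · exact decomp_clopen hP hS Set.inter_subset_left h
  · exact decomp_clopen hP hT Set.inter_subset_right h

lemma step_lemma {P : Set (Set Str)} (hP : IsPTF P) (hreg : RegularPTF P)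
    {S₀ : Set Str} (hS₀ : S₀ ∈ P) {R : Set (Set Str)} (hRP : R ⊆ P)
    (hfin : R.Finite) (hbd : R.Pairwise fun W W' => Disjoint (branches W) (branches W')) :
    ∃ R' ⊆ P, R'.Finite ∧ (R'.Pairwise fun W W' => Disjoint (branches W) (branches W')) ∧
      branches S₀ ∩ (⋃ T ∈ R, branches T) = ⋃ W ∈ R', branches W := by
  have key : ∀ T : Set Str, ∃ F, T ∈ R → (F ⊆ P ∧ F.Finite ∧
      (F.Pairwise fun W W' => Disjoint (branches W) (branches W')) ∧
      branches S₀ ∩ branches T = ⋃ W ∈ F, branches W) := by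
    intro T
    by_cases hTR : T ∈ R
    · obtain ⟨F, h1, h2, h3, h4⟩ := pair_decomp hP hreg hS₀ (hRP hTR)
      exact ⟨F, fun _ => ⟨h1, h2, h3, h4⟩⟩
    · exact ⟨∅, fun hmem => absurd hmem hTR⟩
  choose F hF using key
  have hsubint : ∀ T, T ∈ R → ∀ W ∈ F T, branches W ⊆ branches S₀ ∩ branches T := by
    intro T hTR W hW
    rw [(hF T hTR).2.2.2]
    exact Set.subset_biUnion_of_mem hW
  refine ⟨⋃ T ∈ R, F T, ?_, ?_, ?_, ?_⟩
  · rintro W hW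
    obtain ⟨T, hTR, hWF⟩ := Set.mem_iUnion₂.mp hW
    exact (hF T hTR).1 hWF
  · exact hfin.biUnion fun T hTR => (hF T hTR).2.1
  · intro W hW W' hW' hne
    obtain ⟨T, hTR, hWF⟩ := Set.mem_iUnion₂.mp hW
    obtain ⟨T', hTR', hWF'⟩ := Set.mem_iUnion₂.mp hW'
    by_cases hTT : T = T'
    · exact (hF T hTR).2.2.1 hWF (hTT ▸ hWF') hne
    · have h1 := (hsubint T hTR W hWF).trans Set.inter_subset_right
      have h2 := (hsubint T' hTR' W' hWF').trans Set.inter_subset_right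
      exact Set.disjoint_of_subset h1 h2 (hbd hTR hTR' hTT)
  · rw [Set.inter_iUnion₂]
    ext a
    simp only [Set.mem_iUnion, exists_prop]
    constructor
    · rintro ⟨T, hTR, ha⟩
      rw [(hF T hTR).2.2.2] at ha
      obtain ⟨W, hWF, haW⟩ := Set.mem_iUnion₂.mp ha
      exact ⟨W, ⟨T, hTR, hWF⟩, haW⟩
    · rintro ⟨W, ⟨T, hTR, hWF⟩, haW⟩
      refine ⟨T, hTR, ?_⟩
      rw [(hF T hTR).2.2.2]
      exact Set.mem_iUnion₂.mpr ⟨W, hWF, haW⟩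

lemma main_ind {P : Set (Set Str)} (hP : IsPTF P) (hreg : RegularPTF P) :
    ∀ (k : ℕ) (S : Fin (k+1) → Set Str), (∀ i, S i ∈ P) →
    ∃ R ⊆ P, R.Finite ∧ (R.Pairwise fun W W' => Disjoint (branches W) (branches W')) ∧
      (⋂ i, branches (S i)) = ⋃ T ∈ R, branches T := by
  intro k
  induction k with
  | zero =>
    intro S hS
    refine ⟨{S 0}, by simpa using hS 0, Set.finite_singleton _, Set.pairwise_singleton _ _, ?_⟩
    ext a; simp [Fin.forall_fin_one]
  | succ k ih =>
    intro S hS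
    obtain ⟨R, hRP, hfin, hbd, heq⟩ := ih (fun i => S i.succ) (fun i => hS i.succ)
    obtain ⟨R', h1, h2, h3, h4⟩ := step_lemma hP hreg (hS 0) hRP hfin hbd
    refine ⟨R', h1, h2, h3, ?_⟩
    have hsplit : (⋂ i, branches (S i)) =
        branches (S 0) ∩ ⋂ i : Fin (k+1), branches (S i.succ) := by
      ext a; simp [Set.mem_iInter, Fin.forall_fin_succ]
    rw [hsplit, heq, h4]

/-- Lemma 2.7 (regfn) (2): in a regular perfect-tree forcing notion, a
finite intersection of branch sets is a finite union of branch sets of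
pairwise a.d. trees of the forcing. -/
theorem stmt8 (P : Set (Set Str)) (hP : IsPTF P) (hreg : RegularPTF P)
    (k : ℕ) (hk : 0 < k) (S : Fin k → Set Str) (hS : ∀ i, S i ∈ P) :
    ∃ R ⊆ P, R.Finite ∧ R.Pairwise AD ∧
      (⋂ i, branches (S i)) = ⋃ T ∈ R, branches T := by
  obtain ⟨m, rfl⟩ : ∃ m, k = m + 1 := ⟨k - 1, (Nat.succ_pred_eq_of_pos hk).symm⟩
  obtain ⟨R, hRP, hfin, hbd, heq⟩ := main_ind hP hreg m S hS
  refine ⟨R, hRP, hfin, fun W hW W' hW' hne => ?_, heq⟩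
  exact ad_of_disjoint (hP.2.1 W (hRP hW)).2.1 (hP.2.1 W' (hRP hW')).2.1 (hbd hW hW' hne)


end
end

section
/- Let D ⊆ P where P, Q, R are perfect-tree forcing notions. (a) If P ⊑_D Q and Q ⊑ R, then P ⊑_D R. (b) If ⟨P_α⟩_{α<λ} is a ⊑-increasing sequence of perfect-tree forcing notions, 0 < μ < λ, P = ⋃_{α<μ} P_α, and P ⊑_D P_μ, then P ⊑_D ⋃_{μ≤α<λ} P_α. -/
noncomputable section

section Aux

lemma sqfin_trans {S : Set Str} {Q D : Set (Set Str)}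
    (h1 : SqFin S Q) (h2 : ∀ T ∈ Q, SqFin T D) : SqFin S D := by
  obtain ⟨E, hEQ, hEfin, hcov⟩ := h1
  choose F hFD hFfin hFcov using fun (T : E) => h2 T (hEQ T.2)
  haveI := hEfin.to_subtype
  refine ⟨⋃ T : E, F T, Set.iUnion_subset fun T => hFD T, Set.finite_iUnion hFfin, ?_⟩
  intro a ha
  have := hcov ha
  simp only [Set.mem_iUnion] at this ⊢
  obtain ⟨T, hT, haT⟩ := this
  obtain ⟨R, hR, haR⟩ := by
    have := hFcov ⟨T, hT⟩ haT
    simpa only [Set.mem_iUnion] using this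
  exact ⟨R, ⟨⟨T, hT⟩, hR⟩, haR⟩

lemma clopenIn_iff {A B : Set Pt} :
    ClopenIn A B ↔ (∃ U, IsOpen U ∧ U ∩ B = A ∩ B) ∧ (∃ C, IsClosed C ∧ C ∩ B = A ∩ B) := by
  have hiff : ∀ s t : Set Pt, ((fun x : B => (x : Pt)) ⁻¹' s = (fun x : B => (x : Pt)) ⁻¹' t)
      ↔ s ∩ B = t ∩ B := fun s t => by
    rw [Subtype.preimage_coe_eq_preimage_coe_iff, Set.inter_comm B s, Set.inter_comm B t]
  constructor
  · rintro ⟨hc, ho⟩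
    obtain ⟨U, hU, hU'⟩ := isOpen_induced_iff.1 ho
    obtain ⟨C, hC, hC'⟩ := isClosed_induced_iff.1 hc
    exact ⟨⟨U, hU, (hiff U A).1 hU'⟩, ⟨C, hC, (hiff C A).1 hC'⟩⟩
  · rintro ⟨⟨U, hU, hU'⟩, ⟨C, hC, hC'⟩⟩
    exact ⟨isClosed_induced_iff.2 ⟨C, hC, (hiff C A).2 hC'⟩,
      isOpen_induced_iff.2 ⟨U, hU, (hiff U A).2 hU'⟩⟩

lemma clopenIn_biUnion {B : Set Pt} {α : Type*} {E : Set α} (hE : E.Finite)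
    {f : α → Set Pt} (h : ∀ Q ∈ E, ClopenIn (f Q) B) : ClopenIn (⋃ Q ∈ E, f Q) B := by
  unfold ClopenIn at *
  rw [Set.preimage_iUnion₂]
  exact hE.isClopen_biUnion h

lemma clopenIn_congr {A A' B : Set Pt} (h : A ∩ B = A' ∩ B) (hA : ClopenIn A B) :
    ClopenIn A' B := by
  obtain ⟨⟨U, hU, hU'⟩, ⟨C, hC, hC'⟩⟩ := clopenIn_iff.1 hA
  exact clopenIn_iff.2 ⟨⟨U, hU, hU'.trans h⟩, ⟨C, hC, hC'.trans h⟩⟩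

lemma clopenIn_glue {S T : Set Str} {E : Set (Set Str)} (hfin : E.Finite)
    (hcov : branches S ⊆ ⋃ Q ∈ E, branches Q)
    (h1 : ∀ Q ∈ E, ClopenIn (branches S ∩ branches Q) (branches S))
    (h2 : ∀ Q ∈ E, ClopenIn (branches Q ∩ branches T) (branches Q)) :
    ClopenIn (branches S ∩ branches T) (branches S) := by
  have piece : ∀ Q ∈ E, ClopenIn (branches S ∩ branches Q ∩ branches T) (branches S) := by
    intro Q hQ
    obtain ⟨⟨U, hU, hU'⟩, ⟨C, hC, hC'⟩⟩ := clopenIn_iff.1 (h1 Q hQ)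
    obtain ⟨⟨V, hV, hV'⟩, ⟨W, hW, hW'⟩⟩ := clopenIn_iff.1 (h2 Q hQ)
    have hU'' := Set.ext_iff.1 hU'
    have hV'' := Set.ext_iff.1 hV'
    have hC'' := Set.ext_iff.1 hC'
    have hW'' := Set.ext_iff.1 hW'
    refine clopenIn_iff.2 ⟨⟨U ∩ V, hU.inter hV, ?_⟩, ⟨C ∩ W, hC.inter hW, ?_⟩⟩
    · ext x
      have := hU'' x; have := hV'' x
      simp only [Set.mem_inter_iff] at *
      tauto
    · ext x
      have := hC'' x; have := hW'' x
      simp only [Set.mem_inter_iff] at *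
      tauto
  have hclo := clopenIn_biUnion hfin piece
  apply clopenIn_congr ?_ hclo
  ext x
  simp only [Set.mem_inter_iff, Set.mem_iUnion]
  constructor
  · rintro ⟨⟨Q, hQ, ⟨-, -⟩, hxT⟩, hxS⟩
    exact ⟨⟨hxS, hxT⟩, hxS⟩
  · rintro ⟨⟨hxS, hxT⟩, -⟩
    have := hcov hxS
    simp only [Set.mem_iUnion] at this
    obtain ⟨Q, hQ, hxQ⟩ := this
    exact ⟨⟨Q, hQ, ⟨hxS, hxQ⟩, hxT⟩, hxS⟩

lemma locks_trans {P Q R D : Set (Set Str)} (h1 : Locks P D Q) (h2 : Refines Q R) :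
    Locks P D R := by
  obtain ⟨⟨r1, r2, r3⟩, hD⟩ := h1
  obtain ⟨s1, s2, s3⟩ := h2
  refine ⟨⟨?_, ?_, ?_⟩, fun S hS => sqfin_trans (s2 S hS) hD⟩
  · intro T hT
    obtain ⟨Q1, hQ1, hQ1T⟩ := r1 T hT
    obtain ⟨S, hS, hSQ⟩ := s1 Q1 hQ1
    exact ⟨S, hS, hSQ.trans hQ1T⟩
  · intro S hS
    exact sqfin_trans (s2 S hS) r2
  · intro S hS T hT
    constructor
    · obtain ⟨E, hEQ, hEfin, hcov⟩ := s2 S hS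
      exact clopenIn_glue hEfin hcov
        (fun Q' hQ' => (s3 S hS Q' (hEQ hQ')).1)
        (fun Q' hQ' => (r3 Q' (hEQ hQ') T hT).1)
    · intro hTS
      obtain ⟨Q1, hQ1, hQ1T⟩ := r1 T hT
      exact (s3 S hS Q1 hQ1).2 (hQ1T.trans hTS)

end Aux

/-- Lemma 3.5 (pqm) (2),(3): the locking relation `⊑_D` is preserved by
further refinements and by unions of `⊑`-increasing sequences. -/
theorem stmt16 :
    (∀ P Q R D : Set (Set Str), IsPTF P → IsPTF Q → IsPTF R → D ⊆ P →
      Locks P D Q → Refines Q R → Locks P D R) ∧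
    (∀ (l mu : Ordinal) (P : Ordinal → Set (Set Str)) (D : Set (Set Str)),
      (∀ a < l, IsPTF (P a)) →
      (∀ a b : Ordinal, a < b → b < l → Refines (P a) (P b)) →
      0 < mu → mu < l →
      D ⊆ (⋃ a ∈ Set.Iio mu, P a) →
      Locks (⋃ a ∈ Set.Iio mu, P a) D (P mu) →
      Locks (⋃ a ∈ Set.Iio mu, P a) D (⋃ a ∈ Set.Ico mu l, P a)) := by
  constructor
  · intro P Q R D _ _ _ _ h1 h2
    exact locks_trans h1 h2
  · intro l mu P D _ hinc hmu0 hmul hD hlock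
    have key : ∀ a, mu ≤ a → a < l → Locks (⋃ a ∈ Set.Iio mu, P a) D (P a) := by
      intro a hma hal
      rcases eq_or_lt_of_le hma with rfl | hlt
      · exact hlock
      · exact locks_trans hlock (hinc mu a hlt hal)
    have mem : ∀ S ∈ (⋃ a ∈ Set.Ico mu l, P a), ∃ a, mu ≤ a ∧ a < l ∧ S ∈ P a := by
      intro S hS
      simp only [Set.mem_iUnion, Set.mem_Ico] at hS
      obtain ⟨a, ⟨hma, hal⟩, hSa⟩ := hS
      exact ⟨a, hma, hal, hSa⟩
    obtain ⟨⟨r1, _, _⟩, _⟩ := hlock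
    refine ⟨⟨?_, ?_, ?_⟩, ?_⟩
    · intro T hT
      obtain ⟨S, hS, hST⟩ := r1 T hT
      refine ⟨S, ?_, hST⟩
      simp only [Set.mem_iUnion, Set.mem_Ico]
      exact ⟨mu, ⟨le_refl mu, hmul⟩, hS⟩
    · intro S hS
      obtain ⟨a, hma, hal, hSa⟩ := mem S hS
      exact (key a hma hal).1.2.1 S hSa
    · intro S hS T hT
      obtain ⟨a, hma, hal, hSa⟩ := mem S hS
      exact (key a hma hal).1.2.2 S hSa T hT
    · intro S hS
      obtain ⟨a, hma, hal, hSa⟩ := mem S hS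
      exact (key a hma hal).2 S hSa


end
end
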